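/- For any doubly stochastic matrix M (a square matrix of nonnegative real numbers each of whose rows and columns sums to 1) of size n, there exists a permutation π of {1,...,n} such that M_{i,π(i)} > 0 for all i. -/

import Mathlib

/-- **Mirsky's lemma**: every doubly stochastic matrix has a positive entry
in every position of some permutation. -/
theorem mirsky_doubly_stochastic {n : ℕ} (M : Matrix (Fin n) (Fin n) ℝ)
    (hnonneg : ∀ i j, 0 ≤ M i j)
    (hrow : ∀ i, ∑ j, M i j = 1)
    (hcol : ∀ j, ∑ i, M i j = 1) :
    ∃ π : Equiv.Perm (Fin n), ∀ i, 0 < M i (π i) := by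
  set t : Fin n → Finset (Fin n) := fun i => Finset.univ.filter (fun j => 0 < M i j) with ht
  have hall : ∀ s : Finset (Fin n), s.card ≤ (s.biUnion t).card := by
    intro s
    set B := s.biUnion t with hB
    have key : (s.card : ℝ) ≤ (B.card : ℝ) := by
      have h1 : (s.card : ℝ) = ∑ i ∈ s, ∑ j, M i j := by
        simp [hrow]
      have h2 : ∀ i ∈ s, ∑ j, M i j = ∑ j ∈ B, M i j := by
        intro i hi
        rw [← Finset.sum_subset (Finset.subset_univ B)]
        intro j _ hj
        by_contra h
        have hpos : 0 < M i j := lt_of_le_of_ne (hnonneg i j) (Ne.symm h)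
        exact hj (Finset.mem_biUnion.mpr ⟨i, hi, by simp [ht, hpos]⟩)
      rw [h1, Finset.sum_congr rfl h2]; refine Finset.sum_comm.trans_le ?_
      calc ∑ j ∈ B, ∑ i ∈ s, M i j ≤ ∑ j ∈ B, ∑ i, M i j := by
            apply Finset.sum_le_sum
            intro j _
            exact Finset.sum_le_sum_of_subset_of_nonneg (Finset.subset_univ s)
              (fun i _ _ => hnonneg i j)
        _ = B.card := by simp [hcol]
    exact_mod_cast key
  obtain ⟨f, hinj, hf⟩ := (Finset.all_card_le_biUnion_card_iff_exists_injective t).mp hall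
  refine ⟨Equiv.ofBijective f (Finite.injective_iff_bijective.mp hinj), fun i => ?_⟩
  have := hf i
  simpa [ht] using this
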